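/- arXiv:2104.14872 — 3 statements merged into one kernel-verified Lean document; each statement's English description precedes it below -/
import Mathlib

section
/- Let A and B be 2×2 binary matrices. If for all binary strings x and y of the same length with x ≤ y, the four strings u(x), l(x), u(y), l(y) are pairwise comparable under ≤, then G^k(A,B) is word-representable for every integer k ≥ 0. -/
/-- A word `w` over alphabet `V` represents the graph `G`: every vertex occurs in `w`,
and two distinct vertices are adjacent iff their letters alternate in `w`. -/
def WordRepresents {V : Type*} [DecidableEq V] (w : List V) (G : SimpleGraph V) : Prop :=
  (∀ v : V, v ∈ w) ∧
  ∀ x y : V, x ≠ y →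
    (G.Adj x y ↔ (w.filter (fun z => z == x || z == y)).Chain' (· ≠ ·))

/-- A graph is word-representable if some word represents it. -/
def WordRepresentable {V : Type*} [DecidableEq V] (G : SimpleGraph V) : Prop :=
  ∃ w : List V, WordRepresents w G

/-- The split graph `G(M)` of an `m × n` binary matrix `M`: vertices `Sum.inl j`
(`j : Fin n`) form a clique, vertices `Sum.inr i` (`i : Fin m`) form an independent set,
and `Sum.inr i` is adjacent to `Sum.inl j` iff `M i j = true`. -/
def splitGraph {m n : ℕ} (M : Fin m → Fin n → Bool) : SimpleGraph (Fin n ⊕ Fin m) :=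
  SimpleGraph.fromRel (fun x y =>
    match x, y with
    | Sum.inl _, Sum.inl _ => True
    | Sum.inl j, Sum.inr i => M i j = true
    | _, _ => False)

/-- `morphIter A B k` is the matrix `M^k(A,B)`, obtained from the `1 × 1` matrix `[0]`
by `k` iterations of the 2-dimensional morphism replacing `0` by the block `A`
and `1` by the block `B`. -/
def morphIter {m n : ℕ} (A B : Fin m → Fin n → Bool) :
    (k : ℕ) → Fin (m ^ k) → Fin (n ^ k) → Bool
  | 0, _, _ => false
  | k + 1, i, j =>
    have hm : 0 < m := Nat.pos_of_ne_zero (fun h => by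
      have := i.isLt; simp [h] at this)
    have hn : 0 < n := Nat.pos_of_ne_zero (fun h => by
      have := j.isLt; simp [h] at this)
    have hR : i.val / m < m ^ k :=
      (Nat.div_lt_iff_lt_mul hm).2 (by rw [← pow_succ]; exact i.isLt)
    have hC : j.val / n < n ^ k :=
      (Nat.div_lt_iff_lt_mul hn).2 (by rw [← pow_succ]; exact j.isLt)
    if morphIter A B k ⟨i.val / m, hR⟩ ⟨j.val / n, hC⟩ then
      B ⟨i.val % m, Nat.mod_lt _ hm⟩ ⟨j.val % n, Nat.mod_lt _ hn⟩
    else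
      A ⟨i.val % m, Nat.mod_lt _ hm⟩ ⟨j.val % n, Nat.mod_lt _ hn⟩

/-- `Gk A B k` is the split graph `G^k(A,B) = G(M^k(A,B))`. -/
def Gk {m n : ℕ} (A B : Fin m → Fin n → Bool) (k : ℕ) :
    SimpleGraph (Fin (n ^ k) ⊕ Fin (m ^ k)) :=
  splitGraph (morphIter A B k)

/-- The map `u` on binary strings: letterwise, `u(0)` is the top row of `A`
and `u(1)` is the top row of `B`, extended by concatenation. -/
def uMap (A B : Fin 2 → Fin 2 → Bool) : List Bool → List Bool :=
  fun v => v.flatMap (fun x => if x = true then [B 0 0, B 0 1] else [A 0 0, A 0 1])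

/-- The map `l` on binary strings: letterwise, `l(0)` is the bottom row of `A`
and `l(1)` is the bottom row of `B`, extended by concatenation. -/
def lMap (A B : Fin 2 → Fin 2 → Bool) : List Bool → List Bool :=
  fun v => v.flatMap (fun x => if x = true then [B 1 0, B 1 1] else [A 1 0, A 1 1])

/-- The order `x ≤ y` on binary strings of the same length:
`x i = 1` implies `y i = 1` for every position `i`. -/
def strLe (x y : List Bool) : Prop :=
  List.Forall₂ (fun a b => a = true → b = true) x y

section PairFlat

variable (p q : Bool → Bool)

lemma length_pairFlat (l : List Bool) :
    (l.flatMap (fun b => [p b, q b])).length = 2 * l.length := by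
  induction l with
  | nil => simp
  | cons a t ih => simp [List.flatMap_cons, ih]; ring

lemma getElem_pairFlat (l : List Bool) (i : ℕ) (hi : i < 2 * l.length) :
    (l.flatMap (fun b => [p b, q b]))[i]'(by rw [length_pairFlat]; exact hi)
      = (if i % 2 = 0 then p else q) (l[i/2]'(by omega)) := by
  induction l generalizing i with
  | nil => simp at hi
  | cons a t ih =>
    match i with
    | 0 => simp
    | 1 => simp
    | (i+2) =>
      have h2 : (i+2) % 2 = i % 2 := by omega
      have h3 : (i+2) / 2 = i / 2 + 1 := by omega
      have hi' : i < 2 * t.length := by simp at hi; omega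
      have := ih i hi'
      simp only [List.flatMap_cons, List.cons_append, List.getElem_cons_succ,
        List.nil_append, h2, h3] at *
      exact this

lemma strLe_iff {x y : List Bool} :
    strLe x y ↔ x.length = y.length ∧
      ∀ (i : ℕ) (h1 : i < x.length) (h2 : i < y.length), x[i] = true → y[i] = true := by
  simp [strLe, List.forall₂_iff_get]

lemma strLe_ofFn {N : ℕ} (x y : Fin N → Bool) :
    strLe (List.ofFn x) (List.ofFn y) ↔ ∀ j, x j = true → y j = true := by
  rw [strLe_iff]
  simp only [List.length_ofFn, List.getElem_ofFn, true_and]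
  constructor
  · intro H j
    have := H j.val j.isLt j.isLt
    simpa using this
  · intro H i h1 h2
    exact H ⟨i, h1⟩

end PairFlat

section Lex

lemma lex_lt_iff (K a b ra rb : ℤ) (h1 : 0 ≤ ra) (h2 : ra < K) (h3 : 0 ≤ rb) (h4 : rb < K) :
    a*K + ra < b*K + rb ↔ (a < b ∨ (a = b ∧ ra < rb)) := by
  constructor
  · intro h
    rcases lt_trichotomy a b with h'|h'|h'
    · exact Or.inl h'
    · exact Or.inr ⟨h', by subst h'; linarith⟩
    · exfalso
      have hb : b + 1 ≤ a := by linarith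
      have := mul_le_mul_of_nonneg_right hb (by linarith : (0:ℤ) ≤ K)
      rw [add_mul, one_mul] at this
      linarith
  · rintro (h | ⟨rfl, h⟩)
    · have ha : a + 1 ≤ b := by linarith
      have := mul_le_mul_of_nonneg_right ha (by linarith : (0:ℤ) ≤ K)
      rw [add_mul, one_mul] at this
      linarith
    · linarith

lemma lex_eq_iff (K a b ra rb : ℤ) (h1 : 0 ≤ ra) (h2 : ra < K) (h3 : 0 ≤ rb) (h4 : rb < K) :
    a*K + ra = b*K + rb ↔ (a = b ∧ ra = rb) := by
  constructor
  · intro h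
    have n1 : ¬ (a*K + ra < b*K + rb) := by omega
    have n2 : ¬ (b*K + rb < a*K + ra) := by omega
    rw [lex_lt_iff K a b ra rb h1 h2 h3 h4] at n1
    rw [lex_lt_iff K b a rb ra h3 h4 h1 h2] at n2
    push_neg at n1 n2
    obtain ⟨n1a, n1b⟩ := n1
    obtain ⟨n2a, n2b⟩ := n2
    have hab : a = b := le_antisymm n2a n1a
    exact ⟨hab, le_antisymm (n2b hab.symm) (n1b hab)⟩
  · rintro ⟨rfl, rfl⟩; rfl

end Lex

lemma pair_list_eq {V : Type*} [DecidableEq V] {x y : V} (hxy : x ≠ y) {l : List V}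
    (hnd : l.Nodup) (hmem : ∀ z, z ∈ l ↔ z = x ∨ z = y) :
    l = [x, y] ∨ l = [y, x] := by
  rcases l with _ | ⟨a, _ | ⟨b, _ | ⟨c, t⟩⟩⟩
  · exact absurd ((hmem x).2 (Or.inl rfl)) (by simp)
  · have hx := (hmem x).2 (Or.inl rfl)
    have hy := (hmem y).2 (Or.inr rfl)
    simp at hx hy
    exact absurd (hx.trans hy.symm) hxy
  · have ha := (hmem a).1 (by simp)
    have hb := (hmem b).1 (by simp)
    have hab : a ≠ b := by simp [List.nodup_cons] at hnd; tauto
    rcases ha with rfl | rfl <;> rcases hb with rfl | rfl <;> simp_all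
  · exfalso
    have ha := (hmem a).1 (by simp)
    have hb := (hmem b).1 (by simp)
    have hc := (hmem c).1 (by simp)
    simp [List.nodup_cons] at hnd
    rcases ha with rfl | rfl <;> rcases hb with rfl | rfl <;>
      rcases hc with h | h <;> simp_all

lemma filter_pair_sorted {V : Type*} [DecidableEq V] (f : V → ℤ) (hf : Function.Injective f)
    {l : List V} (hnd : l.Nodup) (hs : l.Pairwise (fun a b => f a ≤ f b))
    {x y : V} (hx : x ∈ l) (hy : y ∈ l) (hxy : x ≠ y) :
    l.filter (fun z => z == x || z == y) = if f x < f y then [x, y] else [y, x] := by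
  set l' := l.filter (fun z => z == x || z == y) with hl'
  have hnd' : l'.Nodup := hnd.filter _
  have hmem : ∀ z, z ∈ l' ↔ z = x ∨ z = y := by
    intro z
    simp only [hl', List.mem_filter, Bool.or_eq_true, beq_iff_eq]
    constructor
    · rintro ⟨_, h⟩; exact h
    · rintro (rfl | rfl) <;> simp [hx, hy]
  have hs' : l'.Pairwise (fun a b => f a ≤ f b) :=
    List.Pairwise.sublist (List.filter_sublist (l := l)) hs
  rcases pair_list_eq hxy hnd' hmem with h | h
  · have hle : f x ≤ f y := by
      rw [h] at hs'; simp [List.pairwise_cons] at hs'; exact hs'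
    have hlt : f x < f y := lt_of_le_of_ne hle (fun e => hxy (hf e))
    rw [h, if_pos hlt]
  · have hle : f y ≤ f x := by
      rw [h] at hs'; simp [List.pairwise_cons] at hs'; exact hs'
    have hlt : f y < f x := lt_of_le_of_ne hle (fun e => hxy.symm (hf e))
    rw [h, if_neg (by linarith)]

lemma wordRep_two_orders {V : Type*} [DecidableEq V] [Fintype V] (f g : V → ℤ)
    (hf : Function.Injective f) (hg : Function.Injective g) (G : SimpleGraph V)
    (hG : ∀ x y : V, x ≠ y → (G.Adj x y ↔ (f x < f y ↔ g x < g y))) :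
    WordRepresentable G := by
  classical
  let rf : V → V → Prop := fun a b => f a ≤ f b
  let rg : V → V → Prop := fun a b => g a ≤ g b
  haveI : DecidableRel rf := fun a b => inferInstanceAs (Decidable (f a ≤ f b))
  haveI : DecidableRel rg := fun a b => inferInstanceAs (Decidable (g a ≤ g b))
  haveI : IsTotal V rf := ⟨fun a b => le_total _ _⟩
  haveI : IsTrans V rf := ⟨fun a b c => le_trans⟩
  haveI : IsTotal V rg := ⟨fun a b => le_total _ _⟩
  haveI : IsTrans V rg := ⟨fun a b c => le_trans⟩
  let lf := List.insertionSort rf Finset.univ.toList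
  let lg := List.insertionSort rg Finset.univ.toList
  have hpf : List.Perm lf Finset.univ.toList := List.perm_insertionSort rf _
  have hpg : List.Perm lg Finset.univ.toList := List.perm_insertionSort rg _
  have hmemf : ∀ v : V, v ∈ lf := fun v => hpf.mem_iff.2 (by simp)
  have hmemg : ∀ v : V, v ∈ lg := fun v => hpg.mem_iff.2 (by simp)
  have hndf : lf.Nodup := hpf.nodup_iff.2 (Finset.nodup_toList _)
  have hndg : lg.Nodup := hpg.nodup_iff.2 (Finset.nodup_toList _)
  have hsf : lf.Pairwise (fun a b => f a ≤ f b) := List.pairwise_insertionSort rf _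
  have hsg : lg.Pairwise (fun a b => g a ≤ g b) := List.pairwise_insertionSort rg _
  refine ⟨lf ++ lg, fun v => by simp [hmemf v], ?_⟩
  intro x y hxy
  rw [hG x y hxy, List.filter_append,
    filter_pair_sorted f hf hndf hsf (hmemf x) (hmemf y) hxy,
    filter_pair_sorted g hg hndg hsg (hmemg x) (hmemg y) hxy]
  have hfne : f x ≠ f y := fun e => hxy (hf e)
  have hgne : g x ≠ g y := fun e => hxy (hg e)
  by_cases h1 : f x < f y <;> by_cases h2 : g x < g y <;>
    simp [h1, h2, List.Chain', List.isChain_cons_cons, hxy, hxy.symm]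

lemma splitGraph_wordRepresentable {m n : ℕ} (M : Fin m → Fin n → Bool)
    (hch : ∀ v v' : Fin m,
      (∀ c, M v c = true → M v' c = true) ∨ (∀ c, M v' c = true → M v c = true)) :
    WordRepresentable (splitGraph M) := by
  classical
  set K : ℤ := 2*m + n + 1 with hK
  have hK0 : (0:ℤ) < K := by positivity
  let d : Fin m → ℕ := fun v => (Finset.univ.filter (fun c => M v c = true)).card
  let S : Fin n → Finset (Fin m) := fun c => Finset.univ.filter (fun v => M v c = true)
  let θ : Fin n → ℕ := fun c => if h : (S c).Nonempty then (S c).inf' h d else n + 1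
  have hdle : ∀ v, d v ≤ n := fun v =>
    le_trans (Finset.card_filter_le _ _) (by simp)
  have hθle : ∀ c, θ c ≤ n + 1 := by
    intro c
    by_cases hne : (S c).Nonempty
    · simp only [θ, dif_pos hne]
      obtain ⟨v₀, hv₀, he⟩ := Finset.exists_mem_eq_inf' hne d
      rw [he]; exact le_trans (hdle v₀) (by omega)
    · simp [θ, dif_neg hne]
  have hkey : ∀ v c, M v c = true ↔ θ c ≤ d v := by
    intro v c
    constructor
    · intro hvc
      have hne : (S c).Nonempty := ⟨v, by simp [S, hvc]⟩
      simp only [θ, dif_pos hne]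
      exact Finset.inf'_le d (by simp [S, hvc])
    · intro hle
      by_cases hne : (S c).Nonempty
      · obtain ⟨v₀, hv₀, he⟩ := Finset.exists_mem_eq_inf' hne d
        have hv₀c : M v₀ c = true := by simpa [S] using hv₀
        have hθ : θ c = d v₀ := by simp only [θ, dif_pos hne]; exact he
        rcases hch v₀ v with hcomp | hcomp
        · exact hcomp c hv₀c
        · have hsub : Finset.univ.filter (fun c' => M v c' = true) ⊆
              Finset.univ.filter (fun c' => M v₀ c' = true) := by
            intro c' hc'
            simp only [Finset.mem_filter, Finset.mem_univ, true_and] at hc' ⊢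
            exact hcomp c' hc'
          have hcard : d v₀ ≤ d v := by rw [← hθ]; exact hle
          have heq : Finset.univ.filter (fun c' => M v c' = true) =
              Finset.univ.filter (fun c' => M v₀ c' = true) :=
            Finset.eq_of_subset_of_card_le hsub hcard
          have : c ∈ Finset.univ.filter (fun c' => M v c' = true) := by
            rw [heq]; simp [hv₀c]
          simpa using this
      · exfalso
        have hθc : θ c = n + 1 := by simp [θ, dif_neg hne]
        have := hdle v
        omega
  -- the two linear orders
  let f : Fin n ⊕ Fin m → ℤ := Sum.elim
    (fun c => ((2*n+2 : ℤ) - θ c) * K + c.val)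
    (fun v => (d v : ℤ) * K + v.val)
  let g : Fin n ⊕ Fin m → ℤ := Sum.elim
    (fun c => (-(θ c : ℤ)) * K + ((m : ℤ) + c.val))
    (fun v => (-(d v : ℤ)) * K + ((m : ℤ) - 1 - v.val))
  -- bounds on remainders
  have hrc : ∀ c : Fin n, (0:ℤ) ≤ (c.val : ℤ) ∧ (c.val : ℤ) < K := by
    intro c; have := c.isLt; constructor <;> [positivity; (push_cast; omega)]
  have hrv : ∀ v : Fin m, (0:ℤ) ≤ (v.val : ℤ) ∧ (v.val : ℤ) < K := by
    intro v; have := v.isLt; constructor <;> [positivity; (push_cast; omega)]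
  have hrc2 : ∀ c : Fin n, (0:ℤ) ≤ (m : ℤ) + c.val ∧ (m : ℤ) + c.val < K := by
    intro c; have := c.isLt; constructor <;> [positivity; (push_cast; omega)]
  have hrv2 : ∀ v : Fin m, (0:ℤ) ≤ (m : ℤ) - 1 - v.val ∧ (m : ℤ) - 1 - v.val < K := by
    intro v; have := v.isLt; constructor <;> (push_cast; omega)
  -- injectivity
  have hfinj : Function.Injective f := by
    intro x y hxy
    clear_value θ S d
    match x, y with
    | Sum.inl c, Sum.inl c' =>
      simp only [f, Sum.elim_inl] at hxy
      rw [lex_eq_iff K _ _ _ _ (hrc c).1 (hrc c).2 (hrc c').1 (hrc c').2] at hxy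
      have : c.val = c'.val := by exact_mod_cast hxy.2
      exact congrArg Sum.inl (Fin.ext this)
    | Sum.inr v, Sum.inr v' =>
      simp only [f, Sum.elim_inr] at hxy
      rw [lex_eq_iff K _ _ _ _ (hrv v).1 (hrv v).2 (hrv v').1 (hrv v').2] at hxy
      have : v.val = v'.val := by exact_mod_cast hxy.2
      exact congrArg Sum.inr (Fin.ext this)
    | Sum.inl c, Sum.inr v =>
      exfalso
      simp only [f, Sum.elim_inl, Sum.elim_inr] at hxy
      rw [lex_eq_iff K _ _ _ _ (hrc c).1 (hrc c).2 (hrv v).1 (hrv v).2] at hxy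
      have h1 := hθle c; have h2 := hdle v
      have := hxy.1
      have hn : ((2*n+2 : ℤ) - θ c) ≠ (d v : ℤ) := by push_cast; omega
      exact hn this
    | Sum.inr v, Sum.inl c =>
      exfalso
      simp only [f, Sum.elim_inl, Sum.elim_inr] at hxy
      rw [lex_eq_iff K _ _ _ _ (hrv v).1 (hrv v).2 (hrc c).1 (hrc c).2] at hxy
      have h1 := hθle c; have h2 := hdle v
      have := hxy.1
      have hn : (d v : ℤ) ≠ ((2*n+2 : ℤ) - θ c) := by push_cast; omega
      exact hn this
  have hginj : Function.Injective g := by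
    intro x y hxy
    clear_value θ S d
    match x, y with
    | Sum.inl c, Sum.inl c' =>
      simp only [g, Sum.elim_inl] at hxy
      rw [lex_eq_iff K _ _ _ _ (hrc2 c).1 (hrc2 c).2 (hrc2 c').1 (hrc2 c').2] at hxy
      have : c.val = c'.val := by have := hxy.2; omega
      exact congrArg Sum.inl (Fin.ext this)
    | Sum.inr v, Sum.inr v' =>
      simp only [g, Sum.elim_inr] at hxy
      rw [lex_eq_iff K _ _ _ _ (hrv2 v).1 (hrv2 v).2 (hrv2 v').1 (hrv2 v').2] at hxy
      have hv := v.isLt; have hv' := v'.isLt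
      have : v.val = v'.val := by have := hxy.2; omega
      exact congrArg Sum.inr (Fin.ext this)
    | Sum.inl c, Sum.inr v =>
      exfalso
      simp only [g, Sum.elim_inl, Sum.elim_inr] at hxy
      rw [lex_eq_iff K _ _ _ _ (hrc2 c).1 (hrc2 c).2 (hrv2 v).1 (hrv2 v).2] at hxy
      have hv := v.isLt
      have := hxy.2
      omega
    | Sum.inr v, Sum.inl c =>
      exfalso
      simp only [g, Sum.elim_inl, Sum.elim_inr] at hxy
      rw [lex_eq_iff K _ _ _ _ (hrv2 v).1 (hrv2 v).2 (hrc2 c).1 (hrc2 c).2] at hxy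
      have hv := v.isLt
      have := hxy.2
      omega
  apply wordRep_two_orders f g hfinj hginj
  intro x y hxy
  match x, y with
  | Sum.inl c, Sum.inl c' =>
    have hadj : (splitGraph M).Adj (Sum.inl c) (Sum.inl c') := by
      simp [splitGraph, SimpleGraph.fromRel_adj, hxy]
    refine Iff.intro (fun _ => ?_) (fun _ => hadj)
    simp only [f, g, Sum.elim_inl]
    rw [lex_lt_iff K _ _ _ _ (hrc c).1 (hrc c).2 (hrc c').1 (hrc c').2,
      lex_lt_iff K _ _ _ _ (hrc2 c).1 (hrc2 c).2 (hrc2 c').1 (hrc2 c').2]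
    push_cast
    omega
  | Sum.inr v, Sum.inr v' =>
    have hvv : (v : ℕ) ≠ (v' : ℕ) := fun e => hxy (congrArg Sum.inr (Fin.ext e))
    have h1 : ¬ (splitGraph M).Adj (Sum.inr v) (Sum.inr v') := by
      simp [splitGraph, SimpleGraph.fromRel_adj]
    refine iff_of_false h1 ?_
    simp only [f, g, Sum.elim_inr]
    rw [lex_lt_iff K _ _ _ _ (hrv v).1 (hrv v).2 (hrv v').1 (hrv v').2,
      lex_lt_iff K _ _ _ _ (hrv2 v).1 (hrv2 v).2 (hrv2 v').1 (hrv2 v').2]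
    have := v.isLt; have := v'.isLt
    push_cast
    omega
  | Sum.inl c, Sum.inr v =>
    have hAdj : (splitGraph M).Adj (Sum.inl c) (Sum.inr v) ↔ M v c = true := by
      simp [splitGraph, SimpleGraph.fromRel_adj]
    rw [hAdj, hkey v c]
    simp only [f, g, Sum.elim_inl, Sum.elim_inr]
    rw [lex_lt_iff K _ _ _ _ (hrc c).1 (hrc c).2 (hrv v).1 (hrv v).2,
      lex_lt_iff K _ _ _ _ (hrc2 c).1 (hrc2 c).2 (hrv2 v).1 (hrv2 v).2]
    have h1 := hθle c; have h2 := hdle v; have := v.isLt; have := c.isLt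
    push_cast
    omega
  | Sum.inr v, Sum.inl c =>
    have hAdj : (splitGraph M).Adj (Sum.inr v) (Sum.inl c) ↔ M v c = true := by
      simp [splitGraph, SimpleGraph.fromRel_adj]
    rw [hAdj, hkey v c]
    simp only [f, g, Sum.elim_inl, Sum.elim_inr]
    rw [lex_lt_iff K _ _ _ _ (hrv v).1 (hrv v).2 (hrc c).1 (hrc c).2,
      lex_lt_iff K _ _ _ _ (hrv2 v).1 (hrv2 v).2 (hrc2 c).1 (hrc2 c).2]
    have h1 := hθle c; have h2 := hdle v; have := v.isLt; have := c.isLt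
    push_cast
    omega

lemma morphIter_succ (A B : Fin 2 → Fin 2 → Bool) (k : ℕ) (i j : Fin (2^(k+1)))
    (hR : i.val / 2 < 2^k) (hC : j.val / 2 < 2^k) (h1 : i.val % 2 < 2) (h2 : j.val % 2 < 2) :
    morphIter A B (k+1) i j =
      (if morphIter A B k ⟨i.val/2, hR⟩ ⟨j.val/2, hC⟩ then B else A) ⟨i.val % 2, h1⟩ ⟨j.val % 2, h2⟩ := by
  rw [morphIter]
  by_cases hc : morphIter A B k ⟨i.val/2, hR⟩ ⟨j.val/2, hC⟩ = true <;> simp [hc]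

lemma uMap_eq (A B : Fin 2 → Fin 2 → Bool) (l : List Bool) :
    uMap A B l = l.flatMap (fun b => [(if b = true then B else A) 0 0, (if b = true then B else A) 0 1]) := by
  simp only [uMap]
  congr 1
  funext b
  cases b <;> rfl

lemma lMap_eq (A B : Fin 2 → Fin 2 → Bool) (l : List Bool) :
    lMap A B l = l.flatMap (fun b => [(if b = true then B else A) 1 0, (if b = true then B else A) 1 1]) := by
  simp only [lMap]
  congr 1
  funext b
  cases b <;> rfl

lemma ite_app_congr (A B : Fin 2 → Fin 2 → Bool) (b : Bool) {x x' y y' : Fin 2}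
    (hx : x = x') (hy : y = y') :
    (if b = true then B else A) x y = (if b = true then B else A) x' y' := by
  subst hx; subst hy; rfl

lemma rowL_succ (A B : Fin 2 → Fin 2 → Bool) (k : ℕ) (i : Fin (2^(k+1))) (hR : i.val/2 < 2^k) :
    List.ofFn (morphIter A B (k+1) i) =
      (if i.val % 2 = 0 then uMap A B else lMap A B)
        (List.ofFn (morphIter A B k ⟨i.val/2, hR⟩)) := by
  have hpow : 2^(k+1) = 2 * 2^k := by ring
  have hlen2 : ∀ (p q : Bool → Bool),
      ((List.ofFn (morphIter A B k ⟨i.val/2, hR⟩)).flatMap (fun b => [p b, q b])).length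
        = 2^(k+1) := by
    intro p q; rw [length_pairFlat, List.length_ofFn]; omega
  have key : ∀ (r : Fin 2) (hr : i.val % 2 = r.val) (p q : Bool → Bool)
      (hp : ∀ b, p b = (if b = true then B else A) r 0)
      (hq : ∀ b, q b = (if b = true then B else A) r 1),
      List.ofFn (morphIter A B (k+1) i)
        = (List.ofFn (morphIter A B k ⟨i.val/2, hR⟩)).flatMap (fun b => [p b, q b]) := by
    intro r hr p q hp hq
    apply List.ext_getElem
    · rw [List.length_ofFn, hlen2]
    · intro jv hj1 hj2
      rw [List.length_ofFn] at hj1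
      have hj2' : jv < 2 * (List.ofFn (morphIter A B k ⟨i.val/2, hR⟩)).length := by
        rw [List.length_ofFn]; omega
      rw [List.getElem_ofFn, getElem_pairFlat p q _ jv hj2']
      have hCd : jv / 2 < 2^k := by omega
      rw [List.getElem_ofFn]
      rw [morphIter_succ A B k i ⟨jv, hj1⟩ hR hCd (Nat.mod_lt _ (by omega)) (Nat.mod_lt _ (by omega))]
      rcases Nat.mod_two_eq_zero_or_one jv with hj | hj
      · rw [if_pos hj, hp]
        exact ite_app_congr A B _ (Fin.ext hr) (Fin.ext (by simpa using hj))
      · rw [if_neg (by omega : ¬ jv % 2 = 0), hq]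
        exact ite_app_congr A B _ (Fin.ext hr) (Fin.ext (by simpa using hj))
  rcases Nat.mod_two_eq_zero_or_one i.val with hi | hi
  · rw [if_pos hi, uMap_eq]
    exact key 0 (by simpa using hi) _ _ (fun b => rfl) (fun b => rfl)
  · rw [if_neg (by omega), lMap_eq]
    exact key 1 (by simpa using hi) _ _ (fun b => rfl) (fun b => rfl)

lemma rows_comp (A B : Fin 2 → Fin 2 → Bool)
    (h : ∀ x y : List Bool, strLe x y →
      ∀ p ∈ [uMap A B x, lMap A B x, uMap A B y, lMap A B y],
      ∀ q ∈ [uMap A B x, lMap A B x, uMap A B y, lMap A B y],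
        strLe p q ∨ strLe q p) :
    ∀ k (i₁ i₂ : Fin (2^k)),
      (∀ j, morphIter A B k i₁ j = true → morphIter A B k i₂ j = true) ∨
      (∀ j, morphIter A B k i₂ j = true → morphIter A B k i₁ j = true) := by
  intro k
  induction k with
  | zero =>
    intro i₁ i₂; left; intro j hj
    rw [morphIter] at hj
    exact absurd hj (by simp)
  | succ k ih =>
    intro i₁ i₂
    have hpow : (2:ℕ)^(k+1) = 2*2^k := by ring
    have hR1 : i₁.val / 2 < 2^k := by have := i₁.isLt; omega
    have hR2 : i₂.val / 2 < 2^k := by have := i₂.isLt; omega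
    set x := List.ofFn (morphIter A B k ⟨i₁.val/2, hR1⟩) with hx
    set y := List.ofFn (morphIter A B k ⟨i₂.val/2, hR2⟩) with hy
    have hr1 := rowL_succ A B k i₁ hR1
    have hr2 := rowL_succ A B k i₂ hR2
    have hmem1 : List.ofFn (morphIter A B (k+1) i₁) = uMap A B x ∨
        List.ofFn (morphIter A B (k+1) i₁) = lMap A B x := by
      rw [hr1, ← hx]; split <;> simp
    have hmem2 : List.ofFn (morphIter A B (k+1) i₂) = uMap A B y ∨
        List.ofFn (morphIter A B (k+1) i₂) = lMap A B y := by
      rw [hr2, ← hy]; split <;> simp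
    have hcomp : strLe (List.ofFn (morphIter A B (k+1) i₁)) (List.ofFn (morphIter A B (k+1) i₂)) ∨
        strLe (List.ofFn (morphIter A B (k+1) i₂)) (List.ofFn (morphIter A B (k+1) i₁)) := by
      rcases ih ⟨i₁.val/2, hR1⟩ ⟨i₂.val/2, hR2⟩ with hc | hc
      · have hxy : strLe x y := (strLe_ofFn _ _).2 hc
        exact h x y hxy _ (by rcases hmem1 with e|e <;> simp [e]) _
          (by rcases hmem2 with e|e <;> simp [e])
      · have hxy : strLe y x := (strLe_ofFn _ _).2 hc
        exact h y x hxy _ (by rcases hmem1 with e|e <;> simp [e]) _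
          (by rcases hmem2 with e|e <;> simp [e])
    rcases hcomp with hc | hc
    · left; intro j; exact (strLe_ofFn _ _).1 hc j
    · right; intro j; exact (strLe_ofFn _ _).1 hc j

theorem stmt15 (A B : Fin 2 → Fin 2 → Bool)
    (h : ∀ x y : List Bool, strLe x y →
      ∀ p ∈ [uMap A B x, lMap A B x, uMap A B y, lMap A B y],
      ∀ q ∈ [uMap A B x, lMap A B x, uMap A B y, lMap A B y],
        strLe p q ∨ strLe q p) :
    ∀ k : ℕ, WordRepresentable (Gk A B k) := by
  intro k
  exact splitGraph_wordRepresentable (morphIter A B k) (rows_comp A B h k)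
end

section
/- For A = [[1,0],[0,0]] and B = [[1,0],[0,1]], the graph G^k(A,B) is word-representable for every integer k ≥ 0. -/
namespace Hlp

variable {γ : Type*} {α : Type*} [DecidableEq α]

lemma join_all_nil {f : ℕ → List γ} : ∀ {l : List ℕ}, (∀ v ∈ l, f v = []) → (l.map f).flatten = []
  | [], _ => rfl
  | a :: l, h => by
    simp only [List.map_cons, List.flatten_cons, h a (List.mem_cons_self), List.nil_append]
    exact join_all_nil fun v hv => h v (List.mem_cons_of_mem _ hv)

lemma join_single {f : ℕ → List γ} :
    ∀ {l : List ℕ}, l.Nodup → ∀ {u : ℕ}, u ∈ l → (∀ v ∈ l, v ≠ u → f v = []) →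
      (l.map f).flatten = f u := by
  intro l
  induction l with
  | nil => intro _ u hu; simp at hu
  | cons a l ih =>
    intro hnd u hu hother
    rcases List.mem_cons.1 hu with rfl | hu'
    · have h0 : ∀ v ∈ l, f v = [] := fun v hv =>
        hother v (List.mem_cons_of_mem _ hv) (by rintro rfl; exact (List.nodup_cons.1 hnd).1 hv)
      simp [join_all_nil h0]
    · have ha : f a = [] := hother a (List.mem_cons_self)
        (by rintro rfl; exact (List.nodup_cons.1 hnd).1 hu')
      simpa [ha] using ih (List.nodup_cons.1 hnd).2 hu'
        (fun v hv hvu => hother v (List.mem_cons_of_mem _ hv) hvu)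

lemma join_pair {f : ℕ → List γ} :
    ∀ {l : List ℕ}, l.Nodup → ∀ {u v : ℕ}, u ∈ l → v ∈ l → u ≠ v →
      (∀ t ∈ l, t ≠ u → t ≠ v → f t = []) →
      (l.map f).flatten = f u ++ f v ∨ (l.map f).flatten = f v ++ f u := by
  intro l
  induction l with
  | nil => intro _ u v hu; simp at hu
  | cons a l ih =>
    intro hnd u v hu hv huv hother
    rcases List.mem_cons.1 hu with rfl | hu'
    · have hv' : v ∈ l := by
        rcases List.mem_cons.1 hv with h | h
        · exact absurd h.symm huv
        · exact h
      left
      have := join_single (f := f) (List.nodup_cons.1 hnd).2 hv'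
        (fun t ht htv => hother t (List.mem_cons_of_mem _ ht)
          (by rintro rfl; exact (List.nodup_cons.1 hnd).1 ht) htv)
      simp [this]
    · rcases List.mem_cons.1 hv with rfl | hv'
      · right
        have := join_single (f := f) (List.nodup_cons.1 hnd).2 hu'
          (fun t ht htu => hother t (List.mem_cons_of_mem _ ht) htu
            (by rintro rfl; exact (List.nodup_cons.1 hnd).1 ht))
        simp [this]
      · have ha : f a = [] := hother a (List.mem_cons_self)
          (by rintro rfl; exact (List.nodup_cons.1 hnd).1 hu')
          (by rintro rfl; exact (List.nodup_cons.1 hnd).1 hv')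
        have := ih (List.nodup_cons.1 hnd).2 hu' hv' huv
          (fun t ht => hother t (List.mem_cons_of_mem _ ht))
        rcases this with h | h
        · left; simp [ha, h]
        · right; simp [ha, h]

lemma filter_eq_single {q : α → Bool} :
    ∀ {l : List α}, l.Nodup → ∀ {a : α}, (∀ z ∈ l, (q z = true ↔ z = a)) → a ∈ l →
      l.filter q = [a] := by
  intro l
  induction l with
  | nil => intro _ a _ ha; simp at ha
  | cons b l ih =>
    intro hnd a hq ha
    rcases List.mem_cons.1 ha with rfl | ha'
    · have h0 : ∀ z ∈ l, ¬ q z = true := fun z hz h =>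
        (List.nodup_cons.1 hnd).1
          (by rwa [(hq z (List.mem_cons_of_mem _ hz)).1 h] at hz)
      simp [List.filter_cons, (hq a (List.mem_cons_self)).2 rfl,
        List.filter_eq_nil_iff.2 h0]
    · have hb : q b = false := by
        rcases Bool.eq_false_or_eq_true (q b) with h | h
        · exact absurd ((hq b (List.mem_cons_self)).1 h)
            (by rintro rfl; exact (List.nodup_cons.1 hnd).1 ha')
        · exact h
      simp [List.filter_cons, hb,
        ih (List.nodup_cons.1 hnd).2 (fun z hz => hq z (List.mem_cons_of_mem _ hz)) ha']

lemma filter_eq_pair {q : α → Bool} :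
    ∀ {l : List α}, l.Nodup → ∀ {a b : α}, (∀ z ∈ l, (q z = true ↔ (z = a ∨ z = b))) →
      a ∈ l → b ∈ l → a ≠ b →
      l.filter q = [a, b] ∨ l.filter q = [b, a] := by
  intro l
  induction l with
  | nil => intro _ a b _ ha; simp at ha
  | cons d l ih =>
    intro hnd a b hq ha hb hab
    rcases List.mem_cons.1 ha with rfl | ha'
    · have hb' : b ∈ l := by
        rcases List.mem_cons.1 hb with h | h
        · exact absurd h.symm hab
        · exact h
      left
      have h1 : l.filter q = [b] := by
        apply filter_eq_single (List.nodup_cons.1 hnd).2 _ hb'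
        intro z hz
        constructor
        · intro h
          rcases (hq z (List.mem_cons_of_mem _ hz)).1 h with h' | h'
          · exact absurd (h' ▸ hz) (List.nodup_cons.1 hnd).1
          · exact h'
        · intro h; exact (hq z (List.mem_cons_of_mem _ hz)).2 (Or.inr h)
      simp [List.filter_cons, (hq a (List.mem_cons_self)).2 (Or.inl rfl), h1]
    · rcases List.mem_cons.1 hb with rfl | hb'
      · right
        have h1 : l.filter q = [a] := by
          apply filter_eq_single (List.nodup_cons.1 hnd).2 _ ha'
          intro z hz
          constructor
          · intro h
            rcases (hq z (List.mem_cons_of_mem _ hz)).1 h with h' | h'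
            · exact h'
            · exact absurd (h' ▸ hz) (List.nodup_cons.1 hnd).1
          · intro h; exact (hq z (List.mem_cons_of_mem _ hz)).2 (Or.inl h)
        simp [List.filter_cons, (hq b (List.mem_cons_self)).2 (Or.inr rfl), h1]
      · have hd : q d = false := by
          rcases Bool.eq_false_or_eq_true (q d) with h | h
          · rcases (hq d (List.mem_cons_self)).1 h with h' | h'
            · exact absurd (show d ∈ l by rw [h']; exact ha') (List.nodup_cons.1 hnd).1
            · exact absurd (show d ∈ l by rw [h']; exact hb') (List.nodup_cons.1 hnd).1
          · exact h
        rcases ih (List.nodup_cons.1 hnd).2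
            (fun z hz => hq z (List.mem_cons_of_mem _ hz)) ha' hb' hab with h | h
        · left; simp [List.filter_cons, hd, h]
        · right; simp [List.filter_cons, hd, h]



def tOnes : ℕ → ℕ
  | 0 => 0
  | n + 1 =>
    if (n + 1) % 2 = 1 then tOnes ((n + 1) / 2) + 1 else 0
  decreasing_by exact Nat.div_lt_self (Nat.succ_pos n) (by norm_num)

lemma tOnes_even {n : ℕ} (h : n % 2 = 0) : tOnes n = 0 := by
  cases n with
  | zero => simp [tOnes]
  | succ m => rw [tOnes]; simp [h]

lemma tOnes_odd {n : ℕ} (h : n % 2 = 1) : tOnes n = tOnes (n / 2) + 1 := by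
  cases n with
  | zero => simp at h
  | succ m => rw [tOnes]; simp [h]

lemma tOnes_le {k : ℕ} : ∀ {n : ℕ}, n < 2 ^ k → tOnes n ≤ k := by
  induction k with
  | zero => intro n hn; interval_cases n; simp [tOnes]
  | succ k ih =>
    intro n hn
    rcases Nat.mod_two_eq_zero_or_one n with h | h
    · simp [tOnes_even h]
    · rw [tOnes_odd h]
      have : n / 2 < 2 ^ k := by
        rw [Nat.div_lt_iff_lt_mul (by norm_num)]
        calc n < 2 ^ (k+1) := hn
        _ = 2 ^ k * 2 := by ring
      exact Nat.succ_le_succ (ih this)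

lemma morph_eq : ∀ (k : ℕ) (i j : Fin (2 ^ k)),
    morphIter ![![true, false], ![false, false]] ![![true, false], ![false, true]] k i j
      = decide (tOnes i.val = tOnes j.val ∧ tOnes i.val < k) := by
  intro k
  induction k with
  | zero => intro i j; simp [morphIter]
  | succ k ih =>
    intro i j
    rw [morphIter]
    rw [ih]
    rcases Nat.mod_two_eq_zero_or_one i.val with hi | hi <;>
      rcases Nat.mod_two_eq_zero_or_one j.val with hj | hj
    · simp [hi, hj, tOnes_even hi, tOnes_even hj]
    · simp [hi, hj, tOnes_even hi, tOnes_odd hj, Fin.mk_one]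
    · simp [hi, hj, tOnes_odd hi, tOnes_even hj, Fin.mk_one]
    · have hi' := tOnes_odd hi
      have hj' := tOnes_odd hj
      simp only [hi, hj, Fin.mk_one, hi', hj']
      simp only [Matrix.cons_val_one, Matrix.head_cons, Matrix.cons_val_zero]
      rcases Bool.eq_false_or_eq_true
          (decide (tOnes (↑i / 2) = tOnes (↑j / 2) ∧ tOnes (↑i / 2) < k)) with h | h <;>
        rw [h] <;> simp_all <;> omega


section Rep
variable {N M : ℕ}

lemma dec_ll (j j' : Fin N) :
    (decide ((Sum.inl j : Fin N ⊕ Fin M) = Sum.inl j')) = decide (j = j') := by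
  rw [decide_eq_decide]; simp
lemma dec_rr (i i' : Fin M) :
    (decide ((Sum.inr i : Fin N ⊕ Fin M) = Sum.inr i')) = decide (i = i') := by
  rw [decide_eq_decide]; simp
lemma dec_lr (j : Fin N) (i : Fin M) :
    (decide ((Sum.inl j : Fin N ⊕ Fin M) = Sum.inr i)) = false :=
  decide_eq_false (by simp)
lemma dec_rl (i : Fin M) (j : Fin N) :
    (decide ((Sum.inr i : Fin N ⊕ Fin M) = Sum.inl j)) = false :=
  decide_eq_false (by simp)

lemma split_adj_ll {Mtx : Fin M → Fin N → Bool} (j j' : Fin N) (h : j ≠ j') :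
    (splitGraph Mtx).Adj (Sum.inl j) (Sum.inl j') := by
  simp [splitGraph, SimpleGraph.fromRel_adj, h]

lemma split_adj_lr {Mtx : Fin M → Fin N → Bool} (j : Fin N) (i : Fin M) :
    (splitGraph Mtx).Adj (Sum.inl j) (Sum.inr i) ↔ Mtx i j = true := by
  simp [splitGraph, SimpleGraph.fromRel_adj]

lemma split_adj_rr {Mtx : Fin M → Fin N → Bool} (i i' : Fin M) :
    ¬ (splitGraph Mtx).Adj (Sum.inr i) (Sum.inr i') := by
  simp [splitGraph, SimpleGraph.fromRel_adj]

variable (r : Fin M → ℕ) (c : Fin N → ℕ)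

def Yl (u : ℕ) : List (Fin N ⊕ Fin M) :=
  ((List.finRange M).filter (fun i => decide (r i = u))).map Sum.inr

def Cl (u : ℕ) : List (Fin N ⊕ Fin M) :=
  ((List.finRange N).filter (fun j => decide (c j = u))).map Sum.inl

def blk (u : ℕ) : List (Fin N ⊕ Fin M) :=
  Yl (N := N) r u ++ Cl (M := M) c u ++ (Yl (N := N) r u).reverse

def wrd (P : ℕ) : List (Fin N ⊕ Fin M) := ((List.range P).map (blk r c)).flatten

theorem rep (P : ℕ) (hr : ∀ i, r i < P) (hc : ∀ j, c j < P) :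
    WordRepresents (wrd r c P) (splitGraph (fun i j => decide (r i = c j))) := by
  classical
  constructor
  · -- every vertex occurs
    intro v
    have hmem : ∀ u, u < P → blk r c u ∈ (List.range P).map (blk r c) :=
      fun u hu => List.mem_map_of_mem (List.mem_range.2 hu)
    cases v with
    | inl j =>
      refine List.mem_flatten.2 ⟨blk r c (c j), hmem _ (hc j), ?_⟩
      refine List.mem_append.2 (Or.inl (List.mem_append.2 (Or.inr ?_)))
      exact List.mem_map_of_mem (List.mem_filter.2 ⟨List.mem_finRange j, by simp⟩)
    | inr i =>
      refine List.mem_flatten.2 ⟨blk r c (r i), hmem _ (hr i), ?_⟩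
      refine List.mem_append.2 (Or.inl (List.mem_append.2 (Or.inl ?_)))
      exact List.mem_map_of_mem (List.mem_filter.2 ⟨List.mem_finRange i, by simp⟩)
  · -- adjacency condition
    have hW : ∀ (p : Fin N ⊕ Fin M → Bool),
        (wrd r c P).filter p = ((List.range P).map (fun u => (blk r c u).filter p)).flatten := by
      intro p
      simp [wrd, List.filter_flatten, List.map_map, Function.comp_def]
    have hB : ∀ (p : Fin N ⊕ Fin M → Bool) (u : ℕ),
        (blk r c u).filter p =
          ((List.finRange M).filter (fun i => p (Sum.inr i) && decide (r i = u))).map Sum.inr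
          ++ ((List.finRange N).filter (fun j => p (Sum.inl j) && decide (c j = u))).map Sum.inl
          ++ (((List.finRange M).filter (fun i => p (Sum.inr i) && decide (r i = u))).map Sum.inr).reverse := by
      intro p u
      simp only [blk, Yl, Cl, List.filter_append, List.filter_reverse, List.filter_map,
        List.filter_filter, Function.comp]
    -- the main computation, for a general predicate of pair form
    have main : ∀ (x y : Fin N ⊕ Fin M), x ≠ y →
        ((splitGraph fun i j => decide (r i = c j)).Adj x y ↔
          ((wrd r c P).filter (fun z => decide (z = x) || decide (z = y))).Chain' (· ≠ ·)) := by
      have key : ∀ (j : Fin N) (i : Fin M),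
          ((splitGraph fun i j => decide (r i = c j)).Adj (Sum.inl j) (Sum.inr i) ↔
            ((wrd r c P).filter
              (fun z => decide (z = Sum.inl j) || decide (z = Sum.inr i))).Chain' (· ≠ ·)) := by
        intro j i
        set x : Fin N ⊕ Fin M := Sum.inl j with hx
        set y : Fin N ⊕ Fin M := Sum.inr i with hy
        set p : Fin N ⊕ Fin M → Bool := fun z => decide (z = x) || decide (z = y) with hp
        have hpr : ∀ i' : Fin M, p (Sum.inr i') = decide (i' = i) := by
          intro i'; simp only [hp, hx, hy, dec_rl, dec_rr, Bool.false_or]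
        have hpl : ∀ j' : Fin N, p (Sum.inl j') = decide (j' = j) := by
          intro j'; simp only [hp, hx, hy, dec_ll, dec_lr, Bool.or_false]
        rw [hW p]
        by_cases hadj : r i = c j
        · -- adjacent: single block [y, x, y]
          have hblk0 : (blk r c (c j)).filter p = [y, x, y] := by
            rw [hB]
            have h1 : (List.finRange M).filter (fun i' => p (Sum.inr i') && decide (r i' = c j)) = [i] := by
              apply filter_eq_single (List.nodup_finRange M) _ (List.mem_finRange i)
              intro z _
              simp [hpr, hadj]
              intro h; rw [h, hadj]
            have h2 : (List.finRange N).filter (fun j' => p (Sum.inl j') && decide (c j' = c j)) = [j] := by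
              apply filter_eq_single (List.nodup_finRange N) _ (List.mem_finRange j)
              intro z _
              simp [hpl]
              intro h; rw [h]
            rw [h1, h2]; rfl
          have hother : ∀ u, u ≠ c j → (blk r c u).filter p = [] := by
            intro u hu
            rw [hB]
            have h1 : (List.finRange M).filter (fun i' => p (Sum.inr i') && decide (r i' = u)) = [] := by
              apply List.filter_eq_nil_iff.2
              intro z _
              simp [hpr]
              intro h; rw [h, hadj]; exact fun h' => hu h'.symm
            have h2 : (List.finRange N).filter (fun j' => p (Sum.inl j') && decide (c j' = u)) = [] := by
              apply List.filter_eq_nil_iff.2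
              intro z _
              simp [hpl]
              intro h; rw [h]; exact fun h' => hu h'.symm
            rw [h1, h2]; rfl
          have hF : ((List.range P).map (fun u => (blk r c u).filter p)).flatten = [y, x, y] := by
            rw [join_single (List.nodup_range) (List.mem_range.2 (hc j))
              (fun v _ hv => hother v hv)]
            exact hblk0
          rw [hF]
          rw [split_adj_lr]
          constructor
          · intro _
            refine List.isChain_cons_cons.2 ⟨?_, List.isChain_pair.2 ?_⟩ <;> simp [hx, hy]
          · intro _
            simp [hadj]
        · -- non-adjacent: blocks [x] and [y, y]
          have hblkx : (blk r c (c j)).filter p = [x] := by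
            rw [hB]
            have h1 : (List.finRange M).filter (fun i' => p (Sum.inr i') && decide (r i' = c j)) = [] := by
              apply List.filter_eq_nil_iff.2
              intro z _
              simp [hpr]
              intro h; rw [h]; exact fun h' => hadj h'
            have h2 : (List.finRange N).filter (fun j' => p (Sum.inl j') && decide (c j' = c j)) = [j] := by
              apply filter_eq_single (List.nodup_finRange N) _ (List.mem_finRange j)
              intro z _
              simp [hpl]
              intro h; rw [h]
            rw [h1, h2]; rfl
          have hblky : (blk r c (r i)).filter p = [y, y] := by
            rw [hB]
            have h1 : (List.finRange M).filter (fun i' => p (Sum.inr i') && decide (r i' = r i)) = [i] := by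
              apply filter_eq_single (List.nodup_finRange M) _ (List.mem_finRange i)
              intro z _
              simp [hpr]
              intro h; rw [h]
            have h2 : (List.finRange N).filter (fun j' => p (Sum.inl j') && decide (c j' = r i)) = [] := by
              apply List.filter_eq_nil_iff.2
              intro z _
              simp [hpl]
              intro h; rw [h]; exact fun h' => hadj h'.symm
            rw [h1, h2]; rfl
          have hother : ∀ u, u ≠ c j → u ≠ r i → (blk r c u).filter p = [] := by
            intro u hu1 hu2
            rw [hB]
            have h1 : (List.finRange M).filter (fun i' => p (Sum.inr i') && decide (r i' = u)) = [] := by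
              apply List.filter_eq_nil_iff.2
              intro z _
              simp [hpr]
              intro h; rw [h]; exact fun h' => hu2 h'.symm
            have h2 : (List.finRange N).filter (fun j' => p (Sum.inl j') && decide (c j' = u)) = [] := by
              apply List.filter_eq_nil_iff.2
              intro z _
              simp [hpl]
              intro h; rw [h]; exact fun h' => hu1 h'.symm
            rw [h1, h2]; rfl
          have hF := join_pair (f := fun u => (blk r c u).filter p) (List.nodup_range)
            (List.mem_range.2 (hc j)) (List.mem_range.2 (hr i))
            (fun h => hadj h.symm) (fun t _ ht1 ht2 => hother t ht1 ht2)
          have hAdj : ¬ (splitGraph fun i j => decide (r i = c j)).Adj x y := by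
            rw [hx, hy, split_adj_lr]; simp [hadj]
          rcases hF with h | h <;> rw [h] <;> simp only [hblkx, hblky] <;>
            simp [hAdj, List.isChain_cons_cons, List.Chain']
      intro x y hxy
      cases x with
      | inl j1 =>
        cases y with
        | inl j2 =>
          -- two clique vertices: always adjacent, word always alternates
          have hne : j1 ≠ j2 := fun h => hxy (by rw [h])
          set x : Fin N ⊕ Fin M := Sum.inl j1 with hx
          set y : Fin N ⊕ Fin M := Sum.inl j2 with hy
          set p : Fin N ⊕ Fin M → Bool := fun z => decide (z = x) || decide (z = y) with hp
          have hpr : ∀ i' : Fin M, p (Sum.inr i') = false := by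
            intro i'; simp only [hp, hx, hy, dec_rl, Bool.or_false]
          have hpl : ∀ j' : Fin N, p (Sum.inl j') = (decide (j' = j1) || decide (j' = j2)) := by
            intro j'; simp only [hp, hx, hy, dec_ll]
          have hAdj : (splitGraph fun i j => decide (r i = c j)).Adj x y := split_adj_ll j1 j2 hne
          rw [hW p]
          have hCfil : ∀ u, (List.finRange M).filter (fun i' => p (Sum.inr i') && decide (r i' = u)) = [] := by
            intro u
            apply List.filter_eq_nil_iff.2
            intro z _
            simp [hpr]
          by_cases hcc : c j1 = c j2
          · have h2 : (List.finRange N).filter (fun j' => p (Sum.inl j') && decide (c j' = c j1)) = [j1, j2]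
                ∨ (List.finRange N).filter (fun j' => p (Sum.inl j') && decide (c j' = c j1)) = [j2, j1] := by
              apply filter_eq_pair (List.nodup_finRange N) _ (List.mem_finRange j1)
                (List.mem_finRange j2) hne
              intro z _
              simp only [hpl, Bool.and_eq_true, Bool.or_eq_true, decide_eq_true_eq]
              constructor
              · rintro ⟨h1, _⟩; exact h1
              · rintro (rfl | rfl)
                · exact ⟨Or.inl rfl, rfl⟩
                · exact ⟨Or.inr rfl, hcc.symm⟩
            have hother : ∀ u, u ≠ c j1 → (blk r c u).filter p = [] := by
              intro u hu
              rw [hB, hCfil]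
              have h3 : (List.finRange N).filter (fun j' => p (Sum.inl j') && decide (c j' = u)) = [] := by
                apply List.filter_eq_nil_iff.2
                intro z _
                simp [hpl]
                rintro (rfl | rfl)
                · exact fun h' => hu h'.symm
                · rw [← hcc]; exact fun h' => hu h'.symm
              rw [h3]; rfl
            have hF := join_single (f := fun u => (blk r c u).filter p) (List.nodup_range)
              (List.mem_range.2 (hc j1)) (fun v _ hv => hother v hv)
            simp only [hF]
            rw [hB p (c j1), hCfil]
            rcases h2 with h | h <;> rw [h] <;>
              simp [hAdj, split_adj_ll j1 j2 hne, List.isChain_cons_cons, List.Chain', hx, hy, hne, hne.symm]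
          · have hblk1 : (blk r c (c j1)).filter p = [x] := by
              rw [hB, hCfil]
              have h3 : (List.finRange N).filter (fun j' => p (Sum.inl j') && decide (c j' = c j1)) = [j1] := by
                apply filter_eq_single (List.nodup_finRange N) _ (List.mem_finRange j1)
                intro z _
                simp only [hpl, Bool.and_eq_true, Bool.or_eq_true, decide_eq_true_eq]
                constructor
                · rintro ⟨rfl | rfl, h2⟩
                  · rfl
                  · exact absurd h2.symm hcc
                · rintro rfl; exact ⟨Or.inl rfl, rfl⟩
              rw [h3]; rfl
            have hblk2 : (blk r c (c j2)).filter p = [y] := by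
              rw [hB, hCfil]
              have h3 : (List.finRange N).filter (fun j' => p (Sum.inl j') && decide (c j' = c j2)) = [j2] := by
                apply filter_eq_single (List.nodup_finRange N) _ (List.mem_finRange j2)
                intro z _
                simp only [hpl, Bool.and_eq_true, Bool.or_eq_true, decide_eq_true_eq]
                constructor
                · rintro ⟨rfl | rfl, h2⟩
                  · exact absurd h2 hcc
                  · rfl
                · rintro rfl; exact ⟨Or.inr rfl, rfl⟩
              rw [h3]; rfl
            have hother : ∀ u, u ≠ c j1 → u ≠ c j2 → (blk r c u).filter p = [] := by
              intro u hu1 hu2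
              rw [hB, hCfil]
              have h3 : (List.finRange N).filter (fun j' => p (Sum.inl j') && decide (c j' = u)) = [] := by
                apply List.filter_eq_nil_iff.2
                intro z _
                simp [hpl]
                rintro (rfl | rfl)
                · exact fun h' => hu1 h'.symm
                · exact fun h' => hu2 h'.symm
              rw [h3]; rfl
            have hF := join_pair (f := fun u => (blk r c u).filter p) (List.nodup_range)
              (List.mem_range.2 (hc j1)) (List.mem_range.2 (hc j2)) hcc
              (fun t _ ht1 ht2 => hother t ht1 ht2)
            rcases hF with h | h <;> rw [h] <;> simp only [hblk1, hblk2] <;>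
              simp [hAdj, split_adj_ll j1 j2 hne, List.isChain_cons_cons, List.Chain', hx, hy, hne, hne.symm, hxy]
        | inr i => exact key j1 i
      | inr i =>
        cases y with
        | inl j =>
          have h1 : (wrd r c P).filter (fun z => decide (z = Sum.inr i) || decide (z = Sum.inl j))
              = (wrd r c P).filter (fun z => decide (z = Sum.inl j) || decide (z = Sum.inr i)) :=
            List.filter_congr (fun z _ => Bool.or_comm _ _)
          rw [h1, (splitGraph _).adj_comm]
          exact key j i
        | inr i2 =>
          have hne : i ≠ i2 := fun h => hxy (by rw [h])
          set x : Fin N ⊕ Fin M := Sum.inr i with hx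
          set y : Fin N ⊕ Fin M := Sum.inr i2 with hy
          set p : Fin N ⊕ Fin M → Bool := fun z => decide (z = x) || decide (z = y) with hp
          have hpr : ∀ i' : Fin M, p (Sum.inr i') = (decide (i' = i) || decide (i' = i2)) := by
            intro i'; simp only [hp, hx, hy, dec_rr]
          have hpl : ∀ j' : Fin N, p (Sum.inl j') = false := by
            intro j'; simp only [hp, hx, hy, dec_lr, Bool.or_false]
          have hAdj : ¬ (splitGraph fun i j => decide (r i = c j)).Adj x y := split_adj_rr i i2
          rw [hW p]
          have hCfil : ∀ u, (List.finRange N).filter (fun j' => p (Sum.inl j') && decide (c j' = u)) = [] := by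
            intro u
            apply List.filter_eq_nil_iff.2
            intro z _
            simp [hpl]
          by_cases hcc : r i = r i2
          · have h2 : (List.finRange M).filter (fun i' => p (Sum.inr i') && decide (r i' = r i)) = [i, i2]
                ∨ (List.finRange M).filter (fun i' => p (Sum.inr i') && decide (r i' = r i)) = [i2, i] := by
              apply filter_eq_pair (List.nodup_finRange M) _ (List.mem_finRange i)
                (List.mem_finRange i2) hne
              intro z _
              simp only [hpr, Bool.and_eq_true, Bool.or_eq_true, decide_eq_true_eq]
              constructor
              · rintro ⟨h1, _⟩; exact h1
              · rintro (rfl | rfl)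
                · exact ⟨Or.inl rfl, rfl⟩
                · exact ⟨Or.inr rfl, hcc.symm⟩
            have hother : ∀ u, u ≠ r i → (blk r c u).filter p = [] := by
              intro u hu
              rw [hB, hCfil]
              have h3 : (List.finRange M).filter (fun i' => p (Sum.inr i') && decide (r i' = u)) = [] := by
                apply List.filter_eq_nil_iff.2
                intro z _
                simp [hpr]
                rintro (rfl | rfl)
                · exact fun h' => hu h'.symm
                · rw [← hcc]; exact fun h' => hu h'.symm
              rw [h3]; rfl
            have hF := join_single (f := fun u => (blk r c u).filter p) (List.nodup_range)
              (List.mem_range.2 (hr i)) (fun v _ hv => hother v hv)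
            simp only [hF]
            rw [hB p (r i), hCfil]
            rcases h2 with h | h <;> rw [h] <;>
              simp [hAdj, List.isChain_cons_cons, List.Chain']
          · have hblk1 : (blk r c (r i)).filter p = [x, x] := by
              rw [hB, hCfil]
              have h3 : (List.finRange M).filter (fun i' => p (Sum.inr i') && decide (r i' = r i)) = [i] := by
                apply filter_eq_single (List.nodup_finRange M) _ (List.mem_finRange i)
                intro z _
                simp only [hpr, Bool.and_eq_true, Bool.or_eq_true, decide_eq_true_eq]
                constructor
                · rintro ⟨rfl | rfl, h2⟩
                  · rfl
                  · exact absurd h2.symm hcc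
                · rintro rfl; exact ⟨Or.inl rfl, rfl⟩
              rw [h3]; rfl
            have hblk2 : (blk r c (r i2)).filter p = [y, y] := by
              rw [hB, hCfil]
              have h3 : (List.finRange M).filter (fun i' => p (Sum.inr i') && decide (r i' = r i2)) = [i2] := by
                apply filter_eq_single (List.nodup_finRange M) _ (List.mem_finRange i2)
                intro z _
                simp only [hpr, Bool.and_eq_true, Bool.or_eq_true, decide_eq_true_eq]
                constructor
                · rintro ⟨rfl | rfl, h2⟩
                  · exact absurd h2 hcc
                  · rfl
                · rintro rfl; exact ⟨Or.inr rfl, rfl⟩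
              rw [h3]; rfl
            have hother : ∀ u, u ≠ r i → u ≠ r i2 → (blk r c u).filter p = [] := by
              intro u hu1 hu2
              rw [hB, hCfil]
              have h3 : (List.finRange M).filter (fun i' => p (Sum.inr i') && decide (r i' = u)) = [] := by
                apply List.filter_eq_nil_iff.2
                intro z _
                simp [hpr]
                rintro (rfl | rfl)
                · exact fun h' => hu1 h'.symm
                · exact fun h' => hu2 h'.symm
              rw [h3]; rfl
            have hF := join_pair (f := fun u => (blk r c u).filter p) (List.nodup_range)
              (List.mem_range.2 (hr i)) (List.mem_range.2 (hr i2)) hcc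
              (fun t _ ht1 ht2 => hother t ht1 ht2)
            rcases hF with h | h <;> rw [h] <;> simp only [hblk1, hblk2] <;>
              simp [hAdj, List.isChain_cons_cons, List.Chain']
    intro x y hxy
    exact main x y hxy

end Rep

end Hlp

theorem stmt17 :
    ∀ k : ℕ, WordRepresentable
      (Gk ![![true, false], ![false, false]] ![![true, false], ![false, true]] k) := by
  intro k
  set r : Fin (2 ^ k) → ℕ := fun i => if Hlp.tOnes i.val = k then k + 1 else Hlp.tOnes i.val
    with hrdef
  set c : Fin (2 ^ k) → ℕ := fun j => Hlp.tOnes j.val with hcdef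
  have hM : morphIter ![![true, false], ![false, false]] ![![true, false], ![false, true]] k
      = fun i j => decide (r i = c j) := by
    funext i j
    rw [Hlp.morph_eq]
    have hi : Hlp.tOnes i.val ≤ k := Hlp.tOnes_le i.isLt
    have hj : Hlp.tOnes j.val ≤ k := Hlp.tOnes_le j.isLt
    rw [decide_eq_decide]
    simp only [hrdef, hcdef]
    by_cases h : Hlp.tOnes i.val = k
    · rw [if_pos h]
      omega
    · rw [if_neg h]
      omega
  have hG : Gk ![![true, false], ![false, false]] ![![true, false], ![false, true]] k
      = splitGraph (fun i j => decide (r i = c j)) := by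
    rw [Gk, hM]
  rw [hG]
  refine ⟨Hlp.wrd r c (k + 2), Hlp.rep r c (k + 2) ?_ ?_⟩
  · intro i
    have := Hlp.tOnes_le (k := k) i.isLt
    simp only [hrdef]
    split <;> omega
  · intro j
    have := Hlp.tOnes_le (k := k) j.isLt
    simp only [hcdef]
    omega
end

section
/- For A = [[1,0],[0,1]] and B = [[0,1],[1,0]], the graph G^k(A,B) is word-representable for every integer k ≥ 0. -/
/-- class adjacency table: 0 = E, 1 = S, 2 = T, 3 = O -/
def crel : Fin 4 → Fin 4 → Bool :=
  ![![false, true, false, false],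
    ![true, true, true, false],
    ![false, true, true, true],
    ![false, false, true, false]]

lemma list_eq_singleton {α : Type*} {l : List α} {y : α}
    (hn : l.Nodup) (h : ∀ z ∈ l, z = y) (hy : y ∈ l) : l = [y] := by
  cases l with
  | nil => simp at hy
  | cons a t =>
    have ha : a = y := h a (by simp)
    have ht : t = [] := by
      cases t with
      | nil => rfl
      | cons b t' =>
        have hb : b = y := h b (by simp)
        rw [List.nodup_cons] at hn
        exact absurd (by simp [ha, hb] : a ∈ b :: t') hn.1
    rw [ha, ht]

lemma list_eq_pair {α : Type*} {l : List α} {x y : α}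
    (hn : l.Nodup) (h : ∀ z ∈ l, z = x ∨ z = y) (hx : x ∈ l) (hy : y ∈ l)
    (hxy : x ≠ y) : l = [x, y] ∨ l = [y, x] := by
  cases l with
  | nil => simp at hx
  | cons a t =>
    have hnt : t.Nodup := (List.nodup_cons.mp hn).2
    have hat : a ∉ t := (List.nodup_cons.mp hn).1
    rcases h a (by simp) with ha | ha
    · subst ha
      left
      have hyt : y ∈ t := by
        rcases List.mem_cons.mp hy with h' | h'
        · exact absurd h'.symm hxy
        · exact h'
      have : t = [y] := list_eq_singleton hnt
        (fun z hz => by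
          rcases h z (List.mem_cons_of_mem _ hz) with h' | h'
          · exact absurd (h' ▸ hz) hat
          · exact h') hyt
      rw [this]
    · subst ha
      right
      have hxt : x ∈ t := by
        rcases List.mem_cons.mp hx with h' | h'
        · exact absurd h' hxy
        · exact h'
      have : t = [x] := list_eq_singleton hnt
        (fun z hz => by
          rcases h z (List.mem_cons_of_mem _ hz) with h' | h'
          · exact h'
          · exact absurd (h' ▸ hz) hat) hxt
      rw [this]

lemma fin4_cases : ∀ a : Fin 4, a = 0 ∨ a = 1 ∨ a = 2 ∨ a = 3 := by decide

theorem rep_of_classes {V : Type*} [Fintype V] [DecidableEq V] (G : SimpleGraph V)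
    (f : V → Fin 4)
    (h : ∀ x y : V, G.Adj x y ↔ x ≠ y ∧ crel (f x) (f y) = true) :
    ∃ w : List V, (∀ v : V, v ∈ w) ∧
      ∀ x y : V, x ≠ y →
        (G.Adj x y ↔ (w.filter (fun z => z == x || z == y)).Chain' (· ≠ ·)) := by
  classical
  set L : Fin 4 → List V := fun c => (Finset.univ.filter fun v => f v = c).toList with hL
  have hmemL : ∀ (v : V) (c : Fin 4), v ∈ L c ↔ f v = c := by
    intro v c
    simp [hL, Finset.mem_toList]
  have hnodupL : ∀ c, (L c).Nodup := fun c => Finset.nodup_toList _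
  refine ⟨L 0 ++ L 1 ++ (L 0).reverse ++ L 2 ++ L 1 ++ L 3 ++ L 2 ++ (L 3).reverse, ?_, ?_⟩
  · intro v
    have hv : v ∈ L (f v) := (hmemL v (f v)).mpr rfl
    rcases fin4_cases (f v) with h0 | h0 | h0 | h0 <;> rw [h0] at hv <;> simp [hv]
  · intro x y hxy
    set P : V → Bool := fun z => z == x || z == y with hP
    -- filter of a block
    have hFnone : ∀ c, f x ≠ c → f y ≠ c → (L c).filter P = [] := by
      intro c hx hy
      apply List.filter_eq_nil_iff.mpr
      intro z hz
      have hzc := (hmemL z c).mp hz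
      simp only [hP, Bool.or_eq_true, beq_iff_eq, not_or]
      constructor
      · rintro rfl; exact hx hzc
      · rintro rfl; exact hy hzc
    have hFx : ∀ c, f x = c → f y ≠ c → (L c).filter P = [x] := by
      intro c hx hy
      apply list_eq_singleton (List.Nodup.filter _ (hnodupL c))
      · intro z hz
        rw [List.mem_filter] at hz
        rcases hz with ⟨hz1, hz2⟩
        simp only [hP, Bool.or_eq_true, beq_iff_eq] at hz2
        rcases hz2 with rfl | rfl
        · rfl
        · exact absurd ((hmemL _ c).mp hz1) hy
      · rw [List.mem_filter]
        exact ⟨(hmemL x c).mpr hx, by simp [hP]⟩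
    have hFy : ∀ c, f x ≠ c → f y = c → (L c).filter P = [y] := by
      intro c hx hy
      apply list_eq_singleton (List.Nodup.filter _ (hnodupL c))
      · intro z hz
        rw [List.mem_filter] at hz
        rcases hz with ⟨hz1, hz2⟩
        simp only [hP, Bool.or_eq_true, beq_iff_eq] at hz2
        rcases hz2 with rfl | rfl
        · exact absurd ((hmemL _ c).mp hz1) hx
        · rfl
      · rw [List.mem_filter]
        exact ⟨(hmemL y c).mpr hy, by simp [hP]⟩
    have hFboth : ∀ c, f x = c → f y = c →
        (L c).filter P = [x, y] ∨ (L c).filter P = [y, x] := by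
      intro c hx hy
      apply list_eq_pair (List.Nodup.filter _ (hnodupL c)) _ _ _ hxy
      · intro z hz
        rw [List.mem_filter] at hz
        simpa [hP] using hz.2
      · rw [List.mem_filter]
        exact ⟨(hmemL x c).mpr hx, by simp [hP]⟩
      · rw [List.mem_filter]
        exact ⟨(hmemL y c).mpr hy, by simp [hP]⟩
    rw [h x y]
    simp only [List.filter_append, List.filter_reverse]
    rcases fin4_cases (f x) with hx | hx | hx | hx <;>
      rcases fin4_cases (f y) with hy | hy | hy | hy
    -- (0,0)
    · rcases hFboth 0 hx hy with h0 | h0 <;>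
      · rw [hFnone 1 (by simp [hx]) (by simp [hy]), hFnone 2 (by simp [hx]) (by simp [hy]),
          hFnone 3 (by simp [hx]) (by simp [hy]), h0]
        simp [crel, hx, hy, List.Chain', List.isChain_cons_cons, hxy, Ne.symm hxy, Matrix.vecHead, Matrix.vecTail]
    -- (0,1)
    · rw [hFx 0 hx (by simp [hy]), hFy 1 (by simp [hx]) hy,
        hFnone 2 (by simp [hx]) (by simp [hy]), hFnone 3 (by simp [hx]) (by simp [hy])]
      simp [crel, hx, hy, List.Chain', List.isChain_cons_cons, hxy, Ne.symm hxy, Matrix.vecHead, Matrix.vecTail]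
    -- (0,2)
    · rw [hFx 0 hx (by simp [hy]), hFy 2 (by simp [hx]) hy,
        hFnone 1 (by simp [hx]) (by simp [hy]), hFnone 3 (by simp [hx]) (by simp [hy])]
      simp [crel, hx, hy, List.Chain', List.isChain_cons_cons, hxy, Ne.symm hxy, Matrix.vecHead, Matrix.vecTail]
    -- (0,3)
    · rw [hFx 0 hx (by simp [hy]), hFy 3 (by simp [hx]) hy,
        hFnone 1 (by simp [hx]) (by simp [hy]), hFnone 2 (by simp [hx]) (by simp [hy])]
      simp [crel, hx, hy, List.Chain', List.isChain_cons_cons, hxy, Ne.symm hxy, Matrix.vecHead, Matrix.vecTail]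
    -- (1,0)
    · rw [hFy 0 (by simp [hx]) hy, hFx 1 hx (by simp [hy]),
        hFnone 2 (by simp [hx]) (by simp [hy]), hFnone 3 (by simp [hx]) (by simp [hy])]
      simp [crel, hx, hy, List.Chain', List.isChain_cons_cons, hxy, Ne.symm hxy, Matrix.vecHead, Matrix.vecTail]
    -- (1,1)
    · rcases hFboth 1 hx hy with h0 | h0 <;>
      · rw [hFnone 0 (by simp [hx]) (by simp [hy]), hFnone 2 (by simp [hx]) (by simp [hy]),
          hFnone 3 (by simp [hx]) (by simp [hy]), h0]
        simp [crel, hx, hy, List.Chain', List.isChain_cons_cons, hxy, Ne.symm hxy, Matrix.vecHead, Matrix.vecTail]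
    -- (1,2)
    · rw [hFx 1 hx (by simp [hy]), hFy 2 (by simp [hx]) hy,
        hFnone 0 (by simp [hx]) (by simp [hy]), hFnone 3 (by simp [hx]) (by simp [hy])]
      simp [crel, hx, hy, List.Chain', List.isChain_cons_cons, hxy, Ne.symm hxy, Matrix.vecHead, Matrix.vecTail]
    -- (1,3)
    · rw [hFx 1 hx (by simp [hy]), hFy 3 (by simp [hx]) hy,
        hFnone 0 (by simp [hx]) (by simp [hy]), hFnone 2 (by simp [hx]) (by simp [hy])]
      simp [crel, hx, hy, List.Chain', List.isChain_cons_cons, hxy, Ne.symm hxy, Matrix.vecHead, Matrix.vecTail]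
    -- (2,0)
    · rw [hFy 0 (by simp [hx]) hy, hFx 2 hx (by simp [hy]),
        hFnone 1 (by simp [hx]) (by simp [hy]), hFnone 3 (by simp [hx]) (by simp [hy])]
      simp [crel, hx, hy, List.Chain', List.isChain_cons_cons, hxy, Ne.symm hxy, Matrix.vecHead, Matrix.vecTail]
    -- (2,1)
    · rw [hFy 1 (by simp [hx]) hy, hFx 2 hx (by simp [hy]),
        hFnone 0 (by simp [hx]) (by simp [hy]), hFnone 3 (by simp [hx]) (by simp [hy])]
      simp [crel, hx, hy, List.Chain', List.isChain_cons_cons, hxy, Ne.symm hxy, Matrix.vecHead, Matrix.vecTail]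
    -- (2,2)
    · rcases hFboth 2 hx hy with h0 | h0 <;>
      · rw [hFnone 0 (by simp [hx]) (by simp [hy]), hFnone 1 (by simp [hx]) (by simp [hy]),
          hFnone 3 (by simp [hx]) (by simp [hy]), h0]
        simp [crel, hx, hy, List.Chain', List.isChain_cons_cons, hxy, Ne.symm hxy, Matrix.vecHead, Matrix.vecTail]
    -- (2,3)
    · rw [hFx 2 hx (by simp [hy]), hFy 3 (by simp [hx]) hy,
        hFnone 0 (by simp [hx]) (by simp [hy]), hFnone 1 (by simp [hx]) (by simp [hy])]
      simp [crel, hx, hy, List.Chain', List.isChain_cons_cons, hxy, Ne.symm hxy, Matrix.vecHead, Matrix.vecTail]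
    -- (3,0)
    · rw [hFy 0 (by simp [hx]) hy, hFx 3 hx (by simp [hy]),
        hFnone 1 (by simp [hx]) (by simp [hy]), hFnone 2 (by simp [hx]) (by simp [hy])]
      simp [crel, hx, hy, List.Chain', List.isChain_cons_cons, hxy, Ne.symm hxy, Matrix.vecHead, Matrix.vecTail]
    -- (3,1)
    · rw [hFy 1 (by simp [hx]) hy, hFx 3 hx (by simp [hy]),
        hFnone 0 (by simp [hx]) (by simp [hy]), hFnone 2 (by simp [hx]) (by simp [hy])]
      simp [crel, hx, hy, List.Chain', List.isChain_cons_cons, hxy, Ne.symm hxy, Matrix.vecHead, Matrix.vecTail]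
    -- (3,2)
    · rw [hFy 2 (by simp [hx]) hy, hFx 3 hx (by simp [hy]),
        hFnone 0 (by simp [hx]) (by simp [hy]), hFnone 1 (by simp [hx]) (by simp [hy])]
      simp [crel, hx, hy, List.Chain', List.isChain_cons_cons, hxy, Ne.symm hxy, Matrix.vecHead, Matrix.vecTail]
    -- (3,3)
    · rcases hFboth 3 hx hy with h0 | h0 <;>
      · rw [hFnone 0 (by simp [hx]) (by simp [hy]), hFnone 1 (by simp [hx]) (by simp [hy]),
          hFnone 2 (by simp [hx]) (by simp [hy]), h0]
        simp [crel, hx, hy, List.Chain', List.isChain_cons_cons, hxy, Ne.symm hxy, Matrix.vecHead, Matrix.vecTail]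

/-- parity of the binary digit sum -/
def pb : ℕ → Bool
  | 0 => false
  | n+1 => xor (decide ((n+1) % 2 = 1)) (pb ((n+1)/2))
decreasing_by exact Nat.div_lt_self (Nat.succ_pos n) one_lt_two

lemma pb_step (n : ℕ) : pb n = xor (decide (n % 2 = 1)) (pb (n / 2)) := by
  cases n with
  | zero => simp [pb]
  | succ n => rw [pb]

lemma morph_eq : ∀ (k : ℕ) (i : Fin (2 ^ k)) (j : Fin (2 ^ k)),
    morphIter ![![true, false], ![false, true]] ![![false, true], ![true, false]] k i j
      = ((pb i.val == pb j.val) == decide (k % 2 = 1)) := by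
  intro k
  induction k with
  | zero =>
    intro i j
    have hi : i.val = 0 := by omega
    have hj : j.val = 0 := by omega
    simp [morphIter, hi, hj, pb]
  | succ k ih =>
    intro i j
    rw [morphIter, ih]
    have hkk : decide ((k + 1) % 2 = 1) = !decide (k % 2 = 1) := by
      rcases Nat.mod_two_eq_zero_or_one k with h | h <;> simp [Nat.add_mod, h]
    rw [hkk]
    have hpi := pb_step i.val
    have hpj := pb_step j.val
    rcases Nat.mod_two_eq_zero_or_one i.val with hi | hi <;>
      rcases Nat.mod_two_eq_zero_or_one j.val with hj | hj <;>
      · simp only [hi, hj] at hpi hpj ⊢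
        rw [hpi, hpj]
        simp only [show (⟨(0:ℕ), by omega⟩ : Fin 2) = 0 from rfl,
          show (⟨(1:ℕ), by omega⟩ : Fin 2) = 1 from rfl]
        cases h1 : pb (i.val / 2) <;> cases h2 : pb (j.val / 2) <;>
          cases h3 : decide (k % 2 = 1) <;>
          simp [Fin.isValue, Matrix.cons_val_zero, Matrix.cons_val_one]

/-- the vertex class: 0 = E, 1 = S, 2 = T, 3 = O -/
def cls (k : ℕ) : Fin (2 ^ k) ⊕ Fin (2 ^ k) → Fin 4
  | Sum.inl j => if pb j.val = decide (k % 2 = 1) then 2 else 1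
  | Sum.inr i => if pb i.val then 3 else 0

theorem stmt18 :
    ∀ k : ℕ, WordRepresentable
      (Gk ![![true, false], ![false, true]] ![![false, true], ![true, false]] k) := by
  intro k
  have hadj : ∀ x y,
      (Gk ![![true, false], ![false, true]] ![![false, true], ![true, false]] k).Adj x y ↔
        x ≠ y ∧ crel (cls k x) (cls k y) = true := by
    intro x y
    show (SimpleGraph.fromRel _).Adj x y ↔ _
    rw [SimpleGraph.fromRel_adj]
    rcases x with j | i <;> rcases y with j' | i'
    · by_cases h1 : pb j.val = decide (k % 2 = 1) <;>
        by_cases h2 : pb j'.val = decide (k % 2 = 1) <;>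
        simp [cls, h1, h2, crel, Matrix.vecHead, Matrix.vecTail]
    · cases hpi : pb i'.val <;> cases hpj : pb j.val <;>
        cases hk2 : decide (k % 2 = 1) <;>
        simp [cls, morph_eq, hpi, hpj, hk2, crel, Matrix.vecHead, Matrix.vecTail]
    · cases hpi : pb i.val <;> cases hpj : pb j'.val <;>
        cases hk2 : decide (k % 2 = 1) <;>
        simp [cls, morph_eq, hpi, hpj, hk2, crel, Matrix.vecHead, Matrix.vecTail]
    · cases hpi : pb i.val <;> cases hpj : pb i'.val <;>
        simp [cls, hpi, hpj, crel, Matrix.vecHead, Matrix.vecTail]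
  exact rep_of_classes _ (cls k) hadj
end
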